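/- For all real r, ρ > 0 with r ≠ ρ: if r > ρ then ∫₀^{2π} log(r² + ρ² + 2rρ·cos θ)·(r + ρ·cos θ)/(r² + ρ² + 2rρ·cos θ) dθ = (2π/r)·(log(r²) + log(1 − ρ²/r²)); and if ρ > r then the same integral equals −(2π/r)·log(1 − r²/ρ²). -/

import Mathlib

set_option maxHeartbeats 1000000

open Real MeasureTheory Complex

lemma posRe (s t : ℝ) (hts : t < s) (ht : 0 ≤ t) (w : ℂ) (hw : ‖w‖ ≤ 1) :
    0 < ((s:ℂ) + t*w).re := by
  have h1 : |w.re| ≤ 1 := le_trans (Complex.abs_re_le_norm w) hw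
  have : ((s:ℂ) + t*w).re = s + t * w.re := by
    simp [Complex.add_re, Complex.re_ofReal_mul]
  rw [this]
  rcases abs_le.mp h1 with ⟨h2, _⟩
  nlinarith

lemma logDiffOn (s t : ℝ) (hts : t < s) (ht : 0 ≤ t) :
    DifferentiableOn ℂ (fun w => Complex.log (s + t*w)) (Metric.closedBall 0 1) := by
  intro w hw
  have hw1 : ‖w‖ ≤ 1 := by
    simpa [Metric.mem_closedBall, Complex.dist_eq] using hw
  refine DifferentiableAt.differentiableWithinAt ?_
  refine DifferentiableAt.clog ?_ (Or.inl (posRe s t hts ht w hw1))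
  exact (differentiableAt_const _).add ((differentiableAt_id).const_mul _)

lemma cauchyUnit (h : ℂ → ℂ) (hh : DifferentiableOn ℂ h (Metric.closedBall 0 1)) (c : ℂ)
    (hc : ‖c‖ < 1) :
    (∫ θ in (0:ℝ)..(2*π), Complex.exp (θ * Complex.I) * Complex.I *
        ((Complex.exp (θ * Complex.I) - c)⁻¹ * h (Complex.exp (θ * Complex.I))))
      = 2 * π * Complex.I * h c := by
  have h0 : c ∈ Metric.ball (0:ℂ) 1 := by
    simpa [Metric.mem_ball, Complex.dist_eq] using hc
  have key := hh.circleIntegral_sub_inv_smul h0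
  rw [circleIntegral] at key
  simp only [deriv_circleMap, circleMap, Complex.ofReal_one, zero_add, one_mul,
    smul_eq_mul] at key
  rw [← key]

lemma intIre {f : ℝ → ℂ} {a b : ℝ} (hf : IntervalIntegrable f volume a b) :
    ∫ θ in a..b, (f θ).re = (∫ θ in a..b, f θ).re := by
  simp only [intervalIntegral, Complex.sub_re]
  have : Complex.re = RCLike.re := rfl
  rw [this, ← integral_re hf.1, ← integral_re hf.2]

lemma case2 (r ρ : ℝ) (hr : 0 < r) (hrρ : r < ρ) :
    (∫ θ in (0:ℝ)..(2*π),
        Real.log (r^2 + ρ^2 + 2*r*ρ*Real.cos θ) * (r + ρ*Real.cos θ)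
          / (r^2 + ρ^2 + 2*r*ρ*Real.cos θ))
      = -(2*π/r) * Real.log (1 - r^2/ρ^2) := by
  have hρ : 0 < ρ := hr.trans hrρ
  set a := r/ρ with hadef
  have ha0 : 0 < a := div_pos hr hρ
  have ha1 : a < 1 := (div_lt_one hρ).mpr hrρ
  have hraC : (ρ:ℂ) * (a:ℝ) = (r:ℂ) := by
    have hρC : (ρ:ℂ) ≠ 0 := Complex.ofReal_ne_zero.mpr hρ.ne'
    rw [hadef]; push_cast; field_simp
  set f0 : ℝ → ℂ := fun θ =>
    ((2*Real.log ρ :ℝ):ℂ) * Complex.exp (θ*Complex.I) / ((ρ:ℂ) + r*Complex.exp (θ*Complex.I))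
    with hf0def
  set f1 : ℝ → ℂ := fun θ =>
    Complex.log (1 + (a:ℝ)*Complex.exp (θ*Complex.I)) * Complex.exp (θ*Complex.I)
      / ((ρ:ℂ) + r*Complex.exp (θ*Complex.I)) with hf1def
  set f2 : ℝ → ℂ := fun θ =>
    Complex.log (1 + (a:ℝ)*Complex.exp (θ*Complex.I))
      / ((ρ:ℂ)*Complex.exp (θ*Complex.I) + r) with hf2def
  have habse : ∀ θ:ℝ, ‖Complex.exp (θ*Complex.I)‖ = 1 := fun θ =>
    Complex.norm_exp_ofReal_mul_I θ
  have hure : ∀ θ:ℝ, 0 < ((1:ℂ) + a*Complex.exp (θ*Complex.I)).re := fun θ => by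
    have := posRe 1 a ha1 ha0.le _ (le_of_eq (habse θ))
    simpa using this
  have hune : ∀ θ:ℝ, ((1:ℂ) + a*Complex.exp (θ*Complex.I)) ≠ 0 := by
    intro θ h
    have := hure θ
    rw [h] at this
    simp at this
  have hpre : ∀ θ:ℝ, 0 < ((ρ:ℂ) + r*Complex.exp (θ*Complex.I)).re := fun θ =>
    posRe ρ r hrρ hr.le _ (le_of_eq (habse θ))
  have hpne : ∀ θ:ℝ, ((ρ:ℂ) + r*Complex.exp (θ*Complex.I)) ≠ 0 := by
    intro θ h
    have := hpre θ
    rw [h] at this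
    simp at this
  have hq2z : ∀ θ:ℝ, (ρ:ℂ)*Complex.exp (θ*Complex.I) + r
      = Complex.exp (θ*Complex.I) * (starRingEnd ℂ) ((ρ:ℂ) + r*Complex.exp (θ*Complex.I)) := by
    intro θ
    have h1 : Complex.exp (θ*Complex.I) * (starRingEnd ℂ) (Complex.exp (θ*Complex.I)) = 1 := by
      rw [Complex.mul_conj, Complex.normSq_eq_norm_sq, habse]
      norm_num
    rw [map_add, map_mul]
    simp only [Complex.conj_ofReal]
    calc (ρ:ℂ)*Complex.exp (θ*Complex.I) + r
        = (ρ:ℂ)*Complex.exp (θ*Complex.I)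
          + r * (Complex.exp (θ*Complex.I) * (starRingEnd ℂ) (Complex.exp (θ*Complex.I))) := by
          rw [h1]; ring
      _ = _ := by ring
  have hq2ne : ∀ θ:ℝ, ((ρ:ℂ)*Complex.exp (θ*Complex.I) + r) ≠ 0 := by
    intro θ
    rw [hq2z θ]
    refine mul_ne_zero (Complex.exp_ne_zero _) fun h => hpne θ ?_
    simpa using congrArg (starRingEnd ℂ) h
  have heane : ∀ θ:ℝ, (Complex.exp (θ*Complex.I) + (a:ℝ)) ≠ 0 := by
    intro θ h
    have h2 : Complex.exp (θ*Complex.I) = -(a:ℝ) := by linear_combination h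
    have := habse θ
    rw [h2] at this
    simp only [norm_neg, Complex.norm_real, Real.norm_eq_abs] at this
    rw [abs_of_pos ha0] at this
    exact absurd this ha1.ne
  have hecont : Continuous (fun θ:ℝ => Complex.exp (θ*Complex.I)) :=
    Complex.continuous_exp.comp (Complex.continuous_ofReal.mul continuous_const)
  have hucont : Continuous (fun θ:ℝ => (1:ℂ) + a*Complex.exp (θ*Complex.I)) :=
    continuous_const.add (continuous_const.mul hecont)
  have hlogcont : Continuous (fun θ:ℝ => Complex.log ((1:ℂ) + a*Complex.exp (θ*Complex.I))) :=
    hucont.clog (fun θ => Or.inl (hure θ))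
  have hpcont : Continuous (fun θ:ℝ => (ρ:ℂ) + r*Complex.exp (θ*Complex.I)) :=
    continuous_const.add (continuous_const.mul hecont)
  have hq2cont : Continuous (fun θ:ℝ => (ρ:ℂ)*Complex.exp (θ*Complex.I) + r) :=
    (continuous_const.mul hecont).add continuous_const
  have hf0c : Continuous f0 := (continuous_const.mul hecont).div hpcont hpne
  have hf1c : Continuous f1 := (hlogcont.mul hecont).div hpcont hpne
  have hf2c : Continuous f2 := hlogcont.div hq2cont hq2ne
  -- pointwise identity
  have hpt : ∀ θ:ℝ, Real.log (r^2 + ρ^2 + 2*r*ρ*Real.cos θ) * (r + ρ*Real.cos θ)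
      / (r^2 + ρ^2 + 2*r*ρ*Real.cos θ) = (f0 θ + f1 θ + f2 θ).re := by
    intro θ
    rw [hf0def, hf1def, hf2def]
    simp only []
    set c := Real.cos θ
    set s := Real.sin θ
    have hsc : s^2 + c^2 = 1 := sin_sq_add_cos_sq θ
    set A := r^2 + ρ^2 + 2*r*ρ*c with hAdef
    have hc1 : -1 ≤ c := Real.neg_one_le_cos θ
    have h2rρ : 0 ≤ 2*r*ρ*(1+c) := mul_nonneg (by nlinarith) (by linarith)
    have hApos : 0 < A := by
      rw [hAdef]
      nlinarith [h2rρ, mul_pos (sub_pos.mpr hrρ) (sub_pos.mpr hrρ)]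
    set e := Complex.exp (θ*Complex.I) with hedef
    have he_re : e.re = c := by simp [hedef, Complex.exp_ofReal_mul_I_re]; rfl
    have he_im : e.im = s := by simp [hedef, Complex.exp_ofReal_mul_I_im]; rfl
    set u := (1:ℂ) + (a:ℝ)*e with hudef
    set p := (ρ:ℂ) + r*e with hpdef
    set q := (ρ:ℂ)*e + (r:ℂ) with hqdef
    have hp_re : p.re = ρ + r*c := by simp [hpdef, he_re]
    have hp_im : p.im = r*s := by simp [hpdef, he_im]
    have hq_re : q.re = ρ*c + r := by simp [hqdef, he_re]
    have hq_im : q.im = ρ*s := by simp [hqdef, he_im]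
    have hnp : Complex.normSq p = A := by
      rw [Complex.normSq_apply, hp_re, hp_im, hAdef]; nlinarith
    have hnq : Complex.normSq q = A := by
      rw [Complex.normSq_apply, hq_re, hq_im, hAdef]; nlinarith
    have hpu : (ρ:ℂ) * u = p := by
      rw [hudef, hpdef, mul_add, mul_one, ← mul_assoc, hraC]
    have habsu : ‖u‖ = Real.sqrt A / ρ := by
      have h1 : ‖p‖ = Real.sqrt A := by
        rw [Complex.norm_def, hnp]
      rw [← hpu, norm_mul, Complex.norm_real, Real.norm_eq_abs, abs_of_pos hρ] at h1
      field_simp at h1 ⊢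
      linarith [h1]
    have hL_re : (Complex.log u).re = Real.log A / 2 - Real.log ρ := by
      rw [Complex.log_re, habsu, Real.log_div (Real.sqrt_ne_zero'.mpr hApos) hρ.ne',
        Real.log_sqrt hApos.le]
    rw [Complex.add_re, Complex.add_re, Complex.div_re, Complex.div_re, Complex.div_re,
      hnp, hnq, hp_re, hp_im, hq_re, hq_im,
      Complex.mul_re, Complex.mul_im, Complex.mul_re, Complex.mul_im,
      he_re, he_im, hL_re]
    simp only [Complex.ofReal_re, Complex.ofReal_im]
    rw [← add_div, ← add_div, ← add_div, ← add_div,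
      ← add_div]
    rw [div_eq_div_iff hApos.ne' hApos.ne']
    linear_combination ((-(Real.log A / 2) - Real.log ρ) * r * A) * hsc
  rw [intervalIntegral.integral_congr (fun θ _ => hpt θ)]
  rw [intIre (f := fun θ => f0 θ + f1 θ + f2 θ) (((hf0c.add hf1c).add hf2c).intervalIntegrable _ _)]
  rw [intervalIntegral.integral_add (f := fun θ => f0 θ + f1 θ) ((hf0c.add hf1c).intervalIntegrable _ _)
    (hf2c.intervalIntegrable _ _)]
  rw [intervalIntegral.integral_add (hf0c.intervalIntegrable _ _) (hf1c.intervalIntegrable _ _)]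
  have hrC : (r:ℂ) ≠ 0 := Complex.ofReal_ne_zero.mpr hr.ne'
  have hρC : (ρ:ℂ) ≠ 0 := Complex.ofReal_ne_zero.mpr hρ.ne'
  have hpden : ∀ w ∈ Metric.closedBall (0:ℂ) 1, (ρ:ℂ) + r*w ≠ 0 := by
    intro w hw h
    have hw1 : ‖w‖ ≤ 1 := by
      simpa [Metric.mem_closedBall, Complex.dist_eq] using hw
    have := posRe ρ r hrρ hr.le w hw1
    rw [h] at this; simp at this
  have hpdendiff : DifferentiableOn ℂ (fun w => (ρ:ℂ) + r*w) (Metric.closedBall 0 1) :=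
    (differentiableOn_const _).add ((differentiable_id.differentiableOn).const_mul _)
  have hlogdiff : DifferentiableOn ℂ (fun w => Complex.log (1 + (a:ℝ)*w))
      (Metric.closedBall 0 1) := by
    have := logDiffOn 1 a ha1 ha0.le
    simpa using this
  -- ∫ f0 = 0
  have hE0 := cauchyUnit (fun w => ((2*Real.log ρ :ℝ):ℂ) * w / ((ρ:ℂ) + r*w) * (-Complex.I))
    ((((differentiable_id.differentiableOn).const_mul _).div hpdendiff hpden).mul_const _)
    0 (by simp)
  have hI0 : (∫ θ in (0:ℝ)..(2*π), f0 θ) = 0 := by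
    rw [show (∫ θ in (0:ℝ)..(2*π), f0 θ)
        = ∫ θ in (0:ℝ)..(2*π), Complex.exp (θ*Complex.I) * Complex.I *
            ((Complex.exp (θ*Complex.I) - 0)⁻¹ *
              (((2*Real.log ρ :ℝ):ℂ) * Complex.exp (θ*Complex.I)
                / ((ρ:ℂ) + r*Complex.exp (θ*Complex.I)) * (-Complex.I))) from
      intervalIntegral.integral_congr (fun θ _ => by
        rw [hf0def]
        have he : Complex.exp (θ*Complex.I) ≠ 0 := Complex.exp_ne_zero _
        have hp := hpne θ
        rw [sub_zero]
        field_simp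
        push_cast
        rw [Complex.I_sq]; ring)]
    rw [hE0]
    simp
  -- ∫ f1 = 0
  have hE1 := cauchyUnit
    (fun w => Complex.log (1 + (a:ℝ)*w) * w / ((ρ:ℂ) + r*w) * (-Complex.I))
    (((hlogdiff.mul (differentiable_id.differentiableOn)).div hpdendiff hpden).mul_const _)
    0 (by simp)
  have hI1 : (∫ θ in (0:ℝ)..(2*π), f1 θ) = 0 := by
    rw [show (∫ θ in (0:ℝ)..(2*π), f1 θ)
        = ∫ θ in (0:ℝ)..(2*π), Complex.exp (θ*Complex.I) * Complex.I *
            ((Complex.exp (θ*Complex.I) - 0)⁻¹ *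
              (Complex.log (1 + (a:ℝ)*Complex.exp (θ*Complex.I)) * Complex.exp (θ*Complex.I)
                / ((ρ:ℂ) + r*Complex.exp (θ*Complex.I)) * (-Complex.I))) from
      intervalIntegral.integral_congr (fun θ _ => by
        rw [hf1def]
        have he : Complex.exp (θ*Complex.I) ≠ 0 := Complex.exp_ne_zero _
        have hp := hpne θ
        rw [sub_zero]
        field_simp
        rw [Complex.I_sq]; ring)]
    rw [hE1]
    simp
  -- ∫ f2
  set canA : ℝ → ℂ := fun θ => Complex.exp (θ*Complex.I) * Complex.I *
      ((Complex.exp (θ*Complex.I) - 0)⁻¹ *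
        (Complex.log (1 + (a:ℝ)*Complex.exp (θ*Complex.I)) / (r:ℂ) * (-Complex.I)))
    with hcanAdef
  set canB : ℝ → ℂ := fun θ => Complex.exp (θ*Complex.I) * Complex.I *
      ((Complex.exp (θ*Complex.I) - (-((a:ℝ):ℂ)))⁻¹ *
        (Complex.I * Complex.log (1 + (a:ℝ)*Complex.exp (θ*Complex.I)) / (r:ℂ)))
    with hcanBdef
  have hcanAc : Continuous canA := by
    apply Continuous.mul (hecont.mul continuous_const)
    apply Continuous.mul
    · exact ((hecont.sub continuous_const).inv₀ (fun θ => by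
        simpa using Complex.exp_ne_zero (θ*Complex.I)))
    · exact (hlogcont.div_const _).mul continuous_const
  have hcanBc : Continuous canB := by
    apply Continuous.mul (hecont.mul continuous_const)
    apply Continuous.mul
    · refine (hecont.sub continuous_const).inv₀ (fun θ => ?_)
      have := heane θ
      intro h
      apply this
      have h' : Complex.exp (θ*Complex.I) - -((a:ℝ):ℂ) = 0 := h
      linear_combination h'
    · exact (continuous_const.mul hlogcont).div_const _
  have habsa : ‖(-((a:ℝ):ℂ))‖ < 1 := by
    simpa [abs_of_pos ha0] using ha1
  have hEA := cauchyUnit (fun w => Complex.log (1 + (a:ℝ)*w) / (r:ℂ) * (-Complex.I))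
    ((hlogdiff.div_const _).mul_const _) 0 (by simp)
  have hEB := cauchyUnit (fun w => Complex.I * Complex.log (1 + (a:ℝ)*w) / (r:ℂ))
    ((hlogdiff.const_mul _).div_const _) (-((a:ℝ):ℂ)) habsa
  have hI2 : (∫ θ in (0:ℝ)..(2*π), f2 θ)
      = 2*(π:ℂ)*Complex.I *
          (Complex.I * Complex.log (1 + (a:ℝ)*(-((a:ℝ):ℂ))) / (r:ℂ)) := by
    rw [show (∫ θ in (0:ℝ)..(2*π), f2 θ) = ∫ θ in (0:ℝ)..(2*π), canA θ + canB θ from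
      intervalIntegral.integral_congr (fun θ _ => by
        simp only [hf2def, hcanAdef, hcanBdef]
        have he : Complex.exp (θ*Complex.I) ≠ 0 := Complex.exp_ne_zero _
        have hq2 := hq2ne θ
        have hea := heane θ
        rw [sub_zero, sub_neg_eq_add]
        field_simp
        set L := Complex.log (1 + (a:ℝ)*Complex.exp (θ*Complex.I)) with hLdef
        set E := Complex.exp (θ*Complex.I) with hEdef
        rw [Complex.I_sq, div_eq_iff (by rwa [mul_comm] at hq2)]
        linear_combination (-(L*E)) * hraC)]
    rw [intervalIntegral.integral_add (hcanAc.intervalIntegrable _ _)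
      (hcanBc.intervalIntegrable _ _), hcanAdef, hcanBdef]
    rw [hEA, hEB]
    simp [Complex.log_one]
  rw [hI0, hI1, hI2]
  have hval : (1 + (a:ℝ)*(-((a:ℝ):ℂ))) = ((1 - a^2 : ℝ) : ℂ) := by
    push_cast
    ring
  rw [hval, ← Complex.ofReal_log (by nlinarith : (0:ℝ) ≤ 1 - a^2)]
  have : (2*(π:ℂ)*Complex.I * (Complex.I * ((Real.log (1-a^2) : ℝ):ℂ) / (r:ℂ)))
      = ((-(2*π/r) * Real.log (1-a^2) : ℝ) : ℂ) := by
    push_cast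
    field_simp
    rw [Complex.I_sq]; ring
  rw [this]
  simp only [zero_add, Complex.ofReal_re]
  have ha2 : a^2 = r^2/ρ^2 := by
    rw [hadef, div_pow]
  rw [ha2]

lemma case1 (r ρ : ℝ) (hρ : 0 < ρ) (hrρ : ρ < r) :
    (∫ θ in (0:ℝ)..(2*π),
        Real.log (r^2 + ρ^2 + 2*r*ρ*Real.cos θ) * (r + ρ*Real.cos θ)
          / (r^2 + ρ^2 + 2*r*ρ*Real.cos θ))
      = 2*π/r * Real.log (r^2 - ρ^2) := by
  have hr : 0 < r := hρ.trans hrρ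
  set f1 : ℝ → ℂ := fun θ =>
    Complex.log ((r:ℂ) + ρ*Complex.exp (θ*Complex.I)) / ((r:ℂ) + ρ*Complex.exp (θ*Complex.I))
    with hf1def
  set f2 : ℝ → ℂ := fun θ =>
    Complex.exp (θ*Complex.I) * Complex.log ((r:ℂ) + ρ*Complex.exp (θ*Complex.I))
      / ((r:ℂ)*Complex.exp (θ*Complex.I) + ρ) with hf2def
  have habse : ∀ θ:ℝ, ‖Complex.exp (θ*Complex.I)‖ = 1 := fun θ =>
    Complex.norm_exp_ofReal_mul_I θ
  have hzre : ∀ θ:ℝ, 0 < ((r:ℂ) + ρ*Complex.exp (θ*Complex.I)).re := fun θ =>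
    posRe r ρ hrρ hρ.le _ (le_of_eq (habse θ))
  have hzne : ∀ θ:ℝ, ((r:ℂ) + ρ*Complex.exp (θ*Complex.I)) ≠ 0 := by
    intro θ h
    have := hzre θ
    rw [h] at this
    simp at this
  have hqz : ∀ θ:ℝ, (r:ℂ)*Complex.exp (θ*Complex.I) + ρ
      = Complex.exp (θ*Complex.I) * (starRingEnd ℂ) ((r:ℂ) + ρ*Complex.exp (θ*Complex.I)) := by
    intro θ
    have h1 : Complex.exp (θ*Complex.I) * (starRingEnd ℂ) (Complex.exp (θ*Complex.I)) = 1 := by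
      rw [Complex.mul_conj, Complex.normSq_eq_norm_sq, habse]
      norm_num
    rw [map_add, map_mul]
    simp only [Complex.conj_ofReal]
    ring_nf
    rw [mul_comm (Complex.exp (θ*Complex.I))] at h1
    calc (r:ℂ)*Complex.exp (θ*Complex.I) + ρ
        = (r:ℂ)*Complex.exp (θ*Complex.I)
          + ρ * ((starRingEnd ℂ) (Complex.exp (θ*Complex.I)) * Complex.exp (θ*Complex.I)) := by
          rw [h1]; ring
      _ = _ := by ring
  have hqne : ∀ θ:ℝ, ((r:ℂ)*Complex.exp (θ*Complex.I) + ρ) ≠ 0 := by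
    intro θ
    rw [hqz θ]
    refine mul_ne_zero (Complex.exp_ne_zero _) fun h => hzne θ ?_
    simpa using congrArg (starRingEnd ℂ) h
  have hecont : Continuous (fun θ:ℝ => Complex.exp (θ*Complex.I)) :=
    Complex.continuous_exp.comp (Complex.continuous_ofReal.mul continuous_const)
  have hzcont : Continuous (fun θ:ℝ => (r:ℂ) + ρ*Complex.exp (θ*Complex.I)) :=
    continuous_const.add (continuous_const.mul hecont)
  have hlogcont : Continuous (fun θ:ℝ => Complex.log ((r:ℂ) + ρ*Complex.exp (θ*Complex.I))) :=
    hzcont.clog (fun θ => Or.inl (hzre θ))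
  have hqcont : Continuous (fun θ:ℝ => (r:ℂ)*Complex.exp (θ*Complex.I) + ρ) :=
    (continuous_const.mul hecont).add continuous_const
  have hf1c : Continuous f1 := hlogcont.div hzcont hzne
  have hf2c : Continuous f2 := (hecont.mul hlogcont).div hqcont hqne
  -- pointwise identity
  have hpt : ∀ θ:ℝ, Real.log (r^2 + ρ^2 + 2*r*ρ*Real.cos θ) * (r + ρ*Real.cos θ)
      / (r^2 + ρ^2 + 2*r*ρ*Real.cos θ) = (f1 θ + f2 θ).re := by
    intro θ
    rw [hf1def, hf2def]
    simp only []
    set c := Real.cos θ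
    set s := Real.sin θ
    have hsc : s^2 + c^2 = 1 := sin_sq_add_cos_sq θ
    set A := r^2 + ρ^2 + 2*r*ρ*c with hAdef
    have hc1 : -1 ≤ c := Real.neg_one_le_cos θ
    have h2rρ : 0 ≤ 2*r*ρ*(1+c) := mul_nonneg (by nlinarith) (by linarith)
    have hApos : 0 < A := by
      rw [hAdef]
      nlinarith [h2rρ, mul_pos (sub_pos.mpr hrρ) (sub_pos.mpr hrρ)]
    set e := Complex.exp (θ*Complex.I) with hedef
    have he_re : e.re = c := by simp [hedef, Complex.exp_ofReal_mul_I_re]; rfl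
    have he_im : e.im = s := by simp [hedef, Complex.exp_ofReal_mul_I_im]; rfl
    set z := (r:ℂ) + ρ*e with hzdef
    set q := (r:ℂ)*e + ρ with hqdef
    have hz_re : z.re = r + ρ*c := by simp [hzdef, he_re]
    have hz_im : z.im = ρ*s := by simp [hzdef, he_im]
    have hq_re : q.re = r*c + ρ := by simp [hqdef, he_re]
    have hq_im : q.im = r*s := by simp [hqdef, he_im]
    have hnz : Complex.normSq z = A := by
      rw [Complex.normSq_apply, hz_re, hz_im, hAdef]; nlinarith
    have hnq : Complex.normSq q = A := by
      rw [Complex.normSq_apply, hq_re, hq_im, hAdef]; nlinarith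
    have hL_re : (Complex.log z).re = Real.log A / 2 := by
      rw [Complex.log_re, Complex.norm_def, hnz, Real.log_sqrt hApos.le]
    rw [Complex.add_re, Complex.div_re, Complex.div_re, hnz, hnq, hz_re, hz_im, hq_re, hq_im,
      Complex.mul_re, Complex.mul_im, he_re, he_im, hL_re]
    rw [← add_div, ← add_div, ← add_div]
    rw [div_eq_div_iff hApos.ne' hApos.ne']
    linear_combination (-(Real.log A * r * A) / 2) * hsc
  rw [intervalIntegral.integral_congr (fun θ _ => hpt θ)]
  rw [intIre (f := fun θ => f1 θ + f2 θ) ((hf1c.add hf2c).intervalIntegrable _ _)]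
  rw [intervalIntegral.integral_add (hf1c.intervalIntegrable _ _) (hf2c.intervalIntegrable _ _)]
  -- evaluate ∫ f1
  have hden : ∀ w ∈ Metric.closedBall (0:ℂ) 1, (r:ℂ) + ρ*w ≠ 0 := by
    intro w hw h
    have hw1 : ‖w‖ ≤ 1 := by
      simpa [Metric.mem_closedBall, Complex.dist_eq] using hw
    have := posRe r ρ hrρ hρ.le w hw1
    rw [h] at this; simp at this
  have hdendiff : DifferentiableOn ℂ (fun w => (r:ℂ) + ρ*w) (Metric.closedBall 0 1) :=
    (differentiableOn_const _).add ((differentiable_id.differentiableOn).const_mul _)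
  have hE1 := cauchyUnit (fun w => Complex.log ((r:ℂ) + ρ*w) / ((r:ℂ) + ρ*w) * (-Complex.I))
    (((logDiffOn r ρ hrρ hρ.le).div hdendiff hden).mul_const _) 0 (by simp)
  have hI1 : (∫ θ in (0:ℝ)..(2*π), f1 θ) = (2*π/r : ℝ) * Real.log r := by
    rw [show (∫ θ in (0:ℝ)..(2*π), f1 θ)
        = ∫ θ in (0:ℝ)..(2*π), Complex.exp (θ*Complex.I) * Complex.I *
            ((Complex.exp (θ*Complex.I) - 0)⁻¹ *
              (Complex.log ((r:ℂ) + ρ*Complex.exp (θ*Complex.I))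
                / ((r:ℂ) + ρ*Complex.exp (θ*Complex.I)) * (-Complex.I))) from
      intervalIntegral.integral_congr (fun θ _ => by
        rw [hf1def]
        have he : Complex.exp (θ*Complex.I) ≠ 0 := Complex.exp_ne_zero _
        rw [sub_zero]
        rw [show Complex.exp (θ*Complex.I) * Complex.I *
            ((Complex.exp (θ*Complex.I))⁻¹ *
              (Complex.log ((r:ℂ) + ρ*Complex.exp (θ*Complex.I))
                / ((r:ℂ) + ρ*Complex.exp (θ*Complex.I)) * (-Complex.I)))
          = (Complex.exp (θ*Complex.I) * (Complex.exp (θ*Complex.I))⁻¹) * (-(Complex.I*Complex.I)) *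
              (Complex.log ((r:ℂ) + ρ*Complex.exp (θ*Complex.I))
                / ((r:ℂ) + ρ*Complex.exp (θ*Complex.I))) from by ring]
        rw [mul_inv_cancel₀ he, Complex.I_mul_I]
        norm_num)]
    rw [hE1]
    show 2*(π:ℂ)*Complex.I * (Complex.log ((r:ℂ) + ρ*0) / ((r:ℂ) + ρ*0) * (-Complex.I))
        = ((2*π/r : ℝ) : ℂ) * (Real.log r : ℝ)
    rw [mul_zero, add_zero, Complex.ofReal_log hr.le]
    have hrC : (r:ℂ) ≠ 0 := Complex.ofReal_ne_zero.mpr hr.ne'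
    field_simp
    rw [Complex.I_sq]; push_cast; field_simp
  have hc2abs : ‖(-(ρ:ℂ)/r)‖ < 1 := by
    rw [norm_div, norm_neg]
    simp only [Complex.norm_real, Real.norm_eq_abs]
    rw [abs_of_pos hρ, abs_of_pos hr, div_lt_one hr]
    exact hrρ
  have hE2 := cauchyUnit (fun w => Complex.log ((r:ℂ) + ρ*w) * (-Complex.I/r))
    ((logDiffOn r ρ hrρ hρ.le).mul_const _) (-(ρ:ℂ)/r) hc2abs
  have hI2 : (∫ θ in (0:ℝ)..(2*π), f2 θ)
      = ((2*π/r : ℝ) : ℂ) * (Real.log ((r^2-ρ^2)/r) : ℝ) := by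
    have hrC : (r:ℂ) ≠ 0 := Complex.ofReal_ne_zero.mpr hr.ne'
    rw [show (∫ θ in (0:ℝ)..(2*π), f2 θ)
        = ∫ θ in (0:ℝ)..(2*π), Complex.exp (θ*Complex.I) * Complex.I *
            ((Complex.exp (θ*Complex.I) - (-(ρ:ℂ)/r))⁻¹ *
              (Complex.log ((r:ℂ) + ρ*Complex.exp (θ*Complex.I)) * (-Complex.I/r))) from
      intervalIntegral.integral_congr (fun θ _ => by
        rw [hf2def]
        have hq := hqne θ
        have hx : (Complex.exp (θ*Complex.I) - (-(ρ:ℂ)/r))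
            = ((r:ℂ)*Complex.exp (θ*Complex.I) + ρ)/r := by
          field_simp
          ring
        rw [hx, inv_div]
        field_simp
        rw [Complex.I_sq]; ring)]
    rw [hE2]
    show 2*(π:ℂ)*Complex.I * (Complex.log ((r:ℂ) + ρ*(-(ρ:ℂ)/r)) * (-Complex.I/r)) = _
    have hval : ((r:ℂ) + ρ*(-(ρ:ℂ)/r)) = (((r^2-ρ^2)/r : ℝ) : ℂ) := by
      push_cast
      field_simp
      ring
    rw [hval, ← Complex.ofReal_log (div_nonneg (by nlinarith) hr.le)]
    field_simp
    rw [Complex.I_sq]; push_cast; field_simp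
  rw [hI1, hI2, ← Complex.ofReal_mul, ← Complex.ofReal_mul, ← Complex.ofReal_add,
    Complex.ofReal_re]
  rw [Real.log_div (by nlinarith) hr.ne']
  ring

/-- Evaluation of the angular integral with a logarithmic weight:
∫₀^{2π} log(r² + ρ² + 2rρ cos θ)·(r + ρ cos θ)/(r² + ρ² + 2rρ cos θ) dθ. -/
theorem stmt3 (r ρ : ℝ) (hr : 0 < r) (hρ : 0 < ρ) (hne : r ≠ ρ) :
    (r > ρ →
      (∫ θ in (0:ℝ)..(2*π),
          Real.log (r^2 + ρ^2 + 2*r*ρ*Real.cos θ) * (r + ρ*Real.cos θ)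
            / (r^2 + ρ^2 + 2*r*ρ*Real.cos θ))
        = (2*π/r) * (Real.log (r^2) + Real.log (1 - ρ^2/r^2))) ∧
    (ρ > r →
      (∫ θ in (0:ℝ)..(2*π),
          Real.log (r^2 + ρ^2 + 2*r*ρ*Real.cos θ) * (r + ρ*Real.cos θ)
            / (r^2 + ρ^2 + 2*r*ρ*Real.cos θ))
        = -(2*π/r) * Real.log (1 - r^2/ρ^2)) := by
  constructor
  · intro h
    rw [case1 r ρ hρ h]
    have h1 : (0:ℝ) < 1 - ρ^2/r^2 := by
      have : ρ^2/r^2 < 1 := by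
        rw [div_lt_one (by positivity)]
        nlinarith
      linarith
    rw [← Real.log_mul (by positivity) h1.ne']
    have h2 : r^2*(1-ρ^2/r^2) = r^2-ρ^2 := by
      field_simp
    rw [h2]
  · intro h
    exact case2 r ρ hr h
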